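/- Let ε ∈ (0,1/8), let n and t be positive integers with t ≤ √(n/3) − 1, let m = ⌈n(1/2+ε)⌉, and let i be an integer with 0 ≤ i ≤ ⌈t/2⌉ − 1. Then the ratio of binomial coefficients satisfies C(n−t, m−i)/C(n, m) ≥ 2^{−t−2}·(1+2ε)^i·(1−2ε)^{t−i}. -/

import Mathlib

open Nat Finset

/-- Weierstrass product inequality. -/
lemma aux_one_sub_sum_le_prod (s : Finset ℕ) (f : ℕ → ℝ)
    (h0 : ∀ j ∈ s, 0 ≤ f j) (h1 : ∀ j ∈ s, f j ≤ 1) :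
    1 - ∑ j ∈ s, f j ≤ ∏ j ∈ s, (1 - f j) := by
  classical
  induction s using Finset.induction_on with
  | empty => simp
  | insert _ _ has =>
    rename_i a s ih
    rw [Finset.sum_insert has, Finset.prod_insert has]
    have h0a : 0 ≤ f a := h0 a (Finset.mem_insert_self a s)
    have h1a : f a ≤ 1 := h1 a (Finset.mem_insert_self a s)
    have ihs : 1 - ∑ j ∈ s, f j ≤ ∏ j ∈ s, (1 - f j) :=
      ih (fun j hj => h0 j (Finset.mem_insert_of_mem hj))
        (fun j hj => h1 j (Finset.mem_insert_of_mem hj))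
    have hs0 : 0 ≤ ∑ j ∈ s, f j :=
      Finset.sum_nonneg (fun j hj => h0 j (Finset.mem_insert_of_mem hj))
    nlinarith [mul_le_mul_of_nonneg_left ihs (by linarith : (0:ℝ) ≤ 1 - f a)]

lemma aux_gauss (N : ℕ) : (∑ j ∈ range N, (j : ℝ)) = N * (N - 1) / 2 := by
  induction N with
  | zero => simp
  | succ k ih => rw [Finset.sum_range_succ, ih]; push_cast; ring

/-- Key combinatorial identity. -/
lemma aux_key (n m t i : ℕ) (him : i ≤ m) (hti : t - i ≤ n - m) (hmn : m ≤ n)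
    (hit : i ≤ t) (htn : t ≤ n) :
    (n - t).choose (m - i) * n.descFactorial t =
      n.choose m * (m.descFactorial i * (n - m).descFactorial (t - i)) := by
  have h1 : m - i ≤ n - t := by omega
  have e : (n - t) - (m - i) = (n - m) - (t - i) := by omega
  have hf : 0 < (m - i)! * ((n - m) - (t - i))! :=
    Nat.mul_pos (Nat.factorial_pos _) (Nat.factorial_pos _)
  refine Nat.eq_of_mul_eq_mul_right hf ?_
  have L : (n - t).choose (m - i) * n.descFactorial t * ((m - i)! * ((n - m) - (t - i))!)
      = n ! := by
    have c1 : (n - t).choose (m - i) * (m - i)! * ((n - t) - (m - i))! = (n - t)! :=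
      Nat.choose_mul_factorial_mul_factorial h1
    have c2 : (n - t)! * n.descFactorial t = n ! := Nat.factorial_mul_descFactorial htn
    calc (n - t).choose (m - i) * n.descFactorial t * ((m - i)! * ((n - m) - (t - i))!)
        = ((n - t).choose (m - i) * (m - i)! * ((n - t) - (m - i))!) * n.descFactorial t := by
          rw [e]; ring
      _ = (n - t)! * n.descFactorial t := by rw [c1]
      _ = n ! := c2
  have R : n.choose m * (m.descFactorial i * (n - m).descFactorial (t - i))
      * ((m - i)! * ((n - m) - (t - i))!) = n ! := by
    have c3 : (m - i)! * m.descFactorial i = m ! := Nat.factorial_mul_descFactorial him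
    have c4 : ((n - m) - (t - i))! * (n - m).descFactorial (t - i) = (n - m)! :=
      Nat.factorial_mul_descFactorial hti
    have c5 : n.choose m * m ! * (n - m)! = n ! := Nat.choose_mul_factorial_mul_factorial hmn
    calc n.choose m * (m.descFactorial i * (n - m).descFactorial (t - i))
        * ((m - i)! * ((n - m) - (t - i))!)
        = n.choose m * ((m - i)! * m.descFactorial i)
            * (((n - m) - (t - i))! * (n - m).descFactorial (t - i)) := by ring
      _ = n.choose m * m ! * (n - m)! := by rw [c3, c4]
      _ = n ! := c5
  rw [L, R]

set_option maxHeartbeats 1600000 in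
/-- Lower bound on the ratio of binomial coefficients from the Canetti–Even–Goldreich
lower-bound argument: for `ε ∈ (0,1/8)`, positive integers `n, t` with
`t ≤ √(n/3) − 1`, `m = ⌈n(1/2+ε)⌉` and `0 ≤ i ≤ ⌈t/2⌉ − 1`,
`C(n−t, m−i)/C(n, m) ≥ 2^{−t−2} (1+2ε)^i (1−2ε)^{t−i}`. -/
theorem choose_ratio_lower_bound (ε : ℝ) (hε : ε ∈ Set.Ioo (0 : ℝ) (1 / 8))
    (n t : ℕ) (hn : 0 < n) (ht : 0 < t) (htn : (t : ℝ) ≤ Real.sqrt ((n : ℝ) / 3) - 1)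
    (m : ℕ) (hm : m = ⌈(n : ℝ) * (1 / 2 + ε)⌉₊)
    (i : ℕ) (hi : i + 1 ≤ ⌈(t : ℝ) / 2⌉₊) :
    (2 : ℝ) ^ (-(t : ℤ) - 2) * (1 + 2 * ε) ^ i * (1 - 2 * ε) ^ (t - i) ≤
      ((n - t).choose (m - i) : ℝ) / (n.choose m : ℝ) := by
  obtain ⟨hε0, hε8⟩ := hε
  obtain ⟨A, hA⟩ : ∃ x : ℝ, x = 1 / 2 + ε := ⟨_, rfl⟩
  obtain ⟨B, hB⟩ : ∃ x : ℝ, x = 1 / 2 - ε := ⟨_, rfl⟩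
  rw [show (1:ℝ) / 2 + ε = A from hA.symm] at hm
  have hABn : A * n + B * n = (n : ℝ) := by rw [hA, hB]; ring
  have hApos : (0 : ℝ) < A := by rw [hA]; linarith
  have hA12 : (1/2 : ℝ) ≤ A := by rw [hA]; linarith
  have hA58 : A ≤ (5/8 : ℝ) := by rw [hA]; linarith
  have hB38 : (3/8 : ℝ) ≤ B := by rw [hB]; linarith
  have hBpos : (0 : ℝ) < B := by linarith
  have hnpos : (0 : ℝ) < n := by exact_mod_cast hn
  -- basic real facts
  have hsq : 3 * ((t : ℝ) + 1) ^ 2 ≤ n := by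
    have h1 : (t : ℝ) + 1 ≤ Real.sqrt ((n : ℝ) / 3) := by linarith
    have h2 : ((t : ℝ) + 1) ^ 2 ≤ (n : ℝ) / 3 := by
      rw [← Real.le_sqrt (by positivity) (by positivity)]; exact h1
    linarith
  have ht1 : (1 : ℝ) ≤ t := by exact_mod_cast ht
  have hn12 : (12 : ℝ) ≤ n := by linarith [sq_nonneg ((t:ℝ) - 1)]
  have ht6 : 6 * ((t : ℝ) + 1) ≤ n := by linarith [sq_nonneg ((t:ℝ) - 1)]
  have htt1 : (t : ℝ) * ((t : ℝ) + 1) ≤ (n : ℝ) / 3 := by nlinarith [sq_nonneg ((t:ℝ))]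
  have hm_lb : A * n ≤ (m : ℝ) := by
    rw [hm]
    have := Nat.le_ceil ((n : ℝ) * A)
    linarith [this]
  have hm_ub : (m : ℝ) < A * n + 1 := by
    rw [hm]
    have := Nat.ceil_lt_add_one (show (0:ℝ) ≤ (n : ℝ) * A by positivity)
    linarith [this]
  -- i < t
  have hit : i < t := by
    have hc : ⌈(t : ℝ) / 2⌉₊ ≤ t := Nat.ceil_le.mpr (by linarith)
    omega
  have hi_le : (i : ℝ) ≤ t := by exact_mod_cast hit.le
  have hi0 : (0 : ℝ) ≤ i := Nat.cast_nonneg i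
  -- nat inequalities
  have hBn : (t : ℝ) + 1 ≤ B * n := by
    linarith [mul_nonneg (show (0:ℝ) ≤ B - 3/8 by linarith) hnpos.le]
  have hmn : m ≤ n := by
    have : (m : ℝ) ≤ n := by
      linarith [mul_nonneg (show (0:ℝ) ≤ 5/8 - A by linarith) hnpos.le]
    exact_mod_cast this
  have hAn_lb : (t : ℝ) + 1 ≤ A * n := by
    linarith [mul_nonneg (show (0:ℝ) ≤ A - 3/8 by linarith) hnpos.le]
  have htm : t ≤ m := by
    have : (t : ℝ) ≤ (m : ℝ) := by linarith
    exact_mod_cast this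
  have hnm_cast : ((n - m : ℕ) : ℝ) = (n : ℝ) - m := Nat.cast_sub hmn
  have hnm_lb : B * n - 1 ≤ ((n - m : ℕ) : ℝ) := by
    rw [hnm_cast]; linarith
  have htnm : t ≤ n - m := by
    have : (t : ℝ) ≤ ((n - m : ℕ) : ℝ) := by linarith
    exact_mod_cast this
  have htn'' : t ≤ n := le_trans htnm (Nat.sub_le n m)
  -- the identity
  have key := aux_key n m t i (le_trans hit.le htm) (le_trans (Nat.sub_le t i) htnm) hmn hit.le
    htn''
  obtain ⟨k, hk⟩ : ∃ x : ℕ, x = t - i := ⟨_, rfl⟩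
  rw [← hk] at key ⊢
  have hik : i + k = t := by omega
  have hkt : (k : ℝ) = (t : ℝ) - i := by rw [hk, Nat.cast_sub hit.le]
  have hkt' : (k : ℝ) ≤ t := by rw [hkt]; linarith
  have hk0 : (0 : ℝ) ≤ k := Nat.cast_nonneg k
  -- positivity
  have hchoose_pos : (0 : ℝ) < (n.choose m : ℝ) := by
    exact_mod_cast Nat.choose_pos hmn
  have hdesc_pos : (0 : ℝ) < (n.descFactorial t : ℝ) := by
    have hfd := Nat.factorial_mul_descFactorial htn''
    have hfp : 0 < (n - t)! * n.descFactorial t := by rw [hfd]; exact n.factorial_pos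
    have : 0 < n.descFactorial t := by
      rcases Nat.eq_zero_or_pos (n.descFactorial t) with h0 | h0
      · rw [h0, Nat.mul_zero] at hfp; omega
      · exact h0
    exact_mod_cast this
  -- rewrite ratio
  have hratio : ((n - t).choose (m - i) : ℝ) / (n.choose m : ℝ)
      = ((m.descFactorial i : ℝ) * ((n - m).descFactorial k : ℝ)) / (n.descFactorial t : ℝ) := by
    have keyR : ((n - t).choose (m - i) : ℝ) * (n.descFactorial t : ℝ)
        = (n.choose m : ℝ) * ((m.descFactorial i : ℝ) * ((n - m).descFactorial k : ℝ)) := by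
      exact_mod_cast key
    rw [div_eq_div_iff hchoose_pos.ne' hdesc_pos.ne', keyR]; ring
  rw [hratio]
  -- rewrite LHS
  have hLHS : (2 : ℝ) ^ (-(t : ℤ) - 2) * (1 + 2 * ε) ^ i * (1 - 2 * ε) ^ k
      = (1 / 4) * A ^ i * B ^ k := by
    have h2 : (2 : ℝ) ^ (-(t : ℤ) - 2) = ((2:ℝ) ^ (t + 2))⁻¹ := by
      rw [show -(t:ℤ) - 2 = -((t:ℤ) + 2) by ring, zpow_neg]
      norm_cast
    have hA2 : (1 + 2 * ε) = 2 * A := by rw [hA]; ring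
    have hB2 : (1 - 2 * ε) = 2 * B := by rw [hB]; ring
    have hp : (2:ℝ) ^ (t + 2) = 2 ^ i * 2 ^ k * 4 := by
      rw [pow_add, ← hik, pow_add]; norm_num
    have h2i : (0:ℝ) < 2 ^ i := by positivity
    have h2k : (0:ℝ) < 2 ^ k := by positivity
    rw [h2, hA2, hB2, mul_pow, mul_pow, hp]
    field_simp
  rw [hLHS]
  -- S1 and S2
  obtain ⟨S1, hS1⟩ : ∃ x : ℝ, x = (i : ℝ) * ((i : ℝ) - 1) / n := ⟨_, rfl⟩
  obtain ⟨S2, hS2⟩ : ∃ x : ℝ, x = (4 / 3) * (k : ℝ) * ((k : ℝ) + 1) / n := ⟨_, rfl⟩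
  have hS1nn : 0 ≤ S1 := by
    rcases Nat.eq_zero_or_pos i with h | h
    · simp [hS1, h]
    · have h1 : (1:ℝ) ≤ i := by exact_mod_cast h
      rw [hS1]
      exact div_nonneg (mul_nonneg hi0 (by linarith)) hnpos.le
  have hS2nn : 0 ≤ S2 := by
    rw [hS2]
    exact div_nonneg (by positivity) hnpos.le
  have hjoint : (i : ℝ) * ((i : ℝ) - 1) + (4/3) * (k : ℝ) * ((k : ℝ) + 1)
      ≤ (4/3) * (t : ℝ) * ((t : ℝ) + 1) := by
    rw [hkt]
    linarith [mul_nonneg hi0 (sub_nonneg.mpr hi_le), mul_nonneg hi0 (by linarith : (0:ℝ) ≤ (t:ℝ)),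
      hi0]
  have hSsum : S1 + S2 ≤ 4 / 9 := by
    rw [hS1, hS2, ← add_div, div_le_iff₀ hnpos]
    linarith
  -- bound on m.descFactorial i
  have hPm : (A * n) ^ i * (1 - S1) ≤ (m.descFactorial i : ℝ) := by
    have hcast : (m.descFactorial i : ℝ) = ∏ j ∈ range i, ((m : ℝ) - j) := by
      rw [Nat.descFactorial_eq_prod_range, Nat.cast_prod]
      refine Finset.prod_congr rfl fun j hj => ?_
      rw [Nat.cast_sub (le_of_lt (lt_of_lt_of_le (Finset.mem_range.mp hj) (le_trans hit.le htm)))]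
    rw [hcast]
    have step1 : ∏ j ∈ range i, (A * n - (j:ℝ)) ≤ ∏ j ∈ range i, ((m : ℝ) - j) := by
      refine Finset.prod_le_prod (fun j hj => ?_) (fun j hj => ?_)
      · have hji : (j : ℝ) < i := by exact_mod_cast Finset.mem_range.mp hj
        linarith
      · linarith [hm_lb]
    refine le_trans ?_ step1
    have hAn0 : (A * (n:ℝ)) ≠ 0 := by positivity
    have step2 : ∏ j ∈ range i, (A * n - (j:ℝ))
        = (A * n) ^ i * ∏ j ∈ range i, (1 - (j : ℝ) / (A * n)) := by
      calc ∏ j ∈ range i, (A * n - (j:ℝ))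
          = ∏ j ∈ range i, ((A * n) * (1 - (j:ℝ) / (A * n))) :=
            Finset.prod_congr rfl fun j hj => by field_simp
        _ = (∏ _j ∈ range i, (A * n)) * ∏ j ∈ range i, (1 - (j:ℝ) / (A * n)) :=
            Finset.prod_mul_distrib
        _ = (A * n) ^ i * ∏ j ∈ range i, (1 - (j:ℝ) / (A * n)) := by
            rw [Finset.prod_const, Finset.card_range]
    rw [step2]
    have hf1 : ∀ j ∈ range i, (j : ℝ) / (A * n) ≤ 1 := by
      intro j hj
      have hji : (j : ℝ) < i := by exact_mod_cast Finset.mem_range.mp hj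
      rw [div_le_one (by positivity)]
      linarith
    have hw := aux_one_sub_sum_le_prod (range i) (fun j => (j:ℝ)/(A*n))
      (fun j hj => by positivity) hf1
    have hsum : ∑ j ∈ range i, (j : ℝ) / (A * n) ≤ S1 := by
      rw [← Finset.sum_div, aux_gauss, hS1]
      rcases Nat.eq_zero_or_pos i with h | h
      · simp [h]
      · have h1 : (1:ℝ) ≤ i := by exact_mod_cast h
        rw [div_le_div_iff₀ (by positivity) hnpos]
        linarith [mul_nonneg (mul_nonneg (mul_nonneg hi0 (by linarith : (0:ℝ) ≤ (i:ℝ) - 1))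
          (by linarith : (0:ℝ) ≤ A - 1/2)) hnpos.le]
    have h1 : 1 - S1 ≤ ∏ j ∈ range i, (1 - (j:ℝ) / (A * n)) := le_trans (by linarith) hw
    exact mul_le_mul_of_nonneg_left h1 (by positivity)
  -- bound on (n-m).descFactorial k
  have hPn : (B * n) ^ k * (1 - S2) ≤ ((n - m).descFactorial k : ℝ) := by
    have hcast : ((n - m).descFactorial k : ℝ) = ∏ j ∈ range k, (((n - m : ℕ) : ℝ) - j) := by
      rw [Nat.descFactorial_eq_prod_range, Nat.cast_prod]
      refine Finset.prod_congr rfl fun j hj => ?_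
      have hjk : j < k := Finset.mem_range.mp hj
      rw [Nat.cast_sub (by omega : j ≤ n - m)]
    rw [hcast]
    have step1 : ∏ j ∈ range k, (B * n - 1 - (j:ℝ)) ≤ ∏ j ∈ range k, (((n - m:ℕ) : ℝ) - j) := by
      refine Finset.prod_le_prod (fun j hj => ?_) (fun j hj => ?_)
      · have hjk : (j : ℝ) < k := by exact_mod_cast Finset.mem_range.mp hj
        linarith
      · linarith [hnm_lb]
    refine le_trans ?_ step1
    have hBn0 : (B * (n:ℝ)) ≠ 0 := by positivity
    have step2 : ∏ j ∈ range k, (B * n - 1 - (j:ℝ))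
        = (B * n) ^ k * ∏ j ∈ range k, (1 - (1 + (j : ℝ)) / (B * n)) := by
      calc ∏ j ∈ range k, (B * n - 1 - (j:ℝ))
          = ∏ j ∈ range k, ((B * n) * (1 - (1 + (j:ℝ)) / (B * n))) :=
            Finset.prod_congr rfl fun j hj => by field_simp; ring
        _ = (∏ _j ∈ range k, (B * n)) * ∏ j ∈ range k, (1 - (1 + (j:ℝ)) / (B * n)) :=
            Finset.prod_mul_distrib
        _ = (B * n) ^ k * ∏ j ∈ range k, (1 - (1 + (j:ℝ)) / (B * n)) := by
            rw [Finset.prod_const, Finset.card_range]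
    rw [step2]
    have hf1 : ∀ j ∈ range k, (1 + (j : ℝ)) / (B * n) ≤ 1 := by
      intro j hj
      have hjk : (j : ℝ) < k := by exact_mod_cast Finset.mem_range.mp hj
      rw [div_le_one (by positivity)]
      linarith
    have hw := aux_one_sub_sum_le_prod (range k) (fun j => (1 + (j:ℝ))/(B*n))
      (fun j hj => by positivity) hf1
    have hsum : ∑ j ∈ range k, (1 + (j : ℝ)) / (B * n) ≤ S2 := by
      rw [← Finset.sum_div, Finset.sum_add_distrib, Finset.sum_const, Finset.card_range,
        aux_gauss, hS2]
      rcases Nat.eq_zero_or_pos k with h | h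
      · simp [h]
      · have h1 : (1:ℝ) ≤ k := by exact_mod_cast h
        rw [nsmul_eq_mul, div_le_div_iff₀ (by positivity) hnpos]
        linarith [mul_nonneg (mul_nonneg (mul_nonneg hk0 (by linarith : (0:ℝ) ≤ (k:ℝ) + 1))
          (by linarith : (0:ℝ) ≤ B - 3/8)) hnpos.le]
    have h1 : 1 - S2 ≤ ∏ j ∈ range k, (1 - (1 + (j:ℝ)) / (B * n)) := le_trans (by linarith) hw
    exact mul_le_mul_of_nonneg_left h1 (by positivity)
  -- assemble
  have h1S1 : (0:ℝ) ≤ 1 - S1 := by linarith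
  have h1S2 : (0:ℝ) ≤ 1 - S2 := by linarith
  have hPm0 : (0:ℝ) ≤ (A*n)^i * (1 - S1) := mul_nonneg (by positivity) h1S1
  have hPn0 : (0:ℝ) ≤ (B*n)^k * (1 - S2) := mul_nonneg (by positivity) h1S2
  have hprod : (A*n)^i * (1-S1) * ((B*n)^k * (1-S2))
      ≤ (m.descFactorial i : ℝ) * ((n-m).descFactorial k : ℝ) :=
    mul_le_mul hPm hPn hPn0 (le_trans hPm0 hPm)
  have hpow_eq : (A*n)^i * (B*n)^k = A^i * B^k * (n:ℝ)^t := by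
    rw [mul_pow, mul_pow, ← hik, pow_add]; ring
  have hfinal : (1/4) * A^i * B^k * (n:ℝ)^t
      ≤ (m.descFactorial i : ℝ) * ((n-m).descFactorial k : ℝ) := by
    refine le_trans ?_ hprod
    have h59 : (1/4 : ℝ) ≤ (1 - S1) * (1 - S2) := by
      have hmul : 0 ≤ S1 * S2 := mul_nonneg hS1nn hS2nn
      have hexp : (1 - S1) * (1 - S2) = 1 - (S1 + S2) + S1 * S2 := by ring
      rw [hexp]; linarith
    calc (1/4) * A^i * B^k * (n:ℝ)^t = (A^i * B^k * (n:ℝ)^t) * (1/4) := by ring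
      _ ≤ (A^i * B^k * (n:ℝ)^t) * ((1-S1)*(1-S2)) :=
          mul_le_mul_of_nonneg_left h59 (by positivity)
      _ = (A*n)^i * (1-S1) * ((B*n)^k * (1-S2)) := by rw [← hpow_eq]; ring
  have hdesc_le : (n.descFactorial t : ℝ) ≤ (n : ℝ) ^ t := by
    exact_mod_cast Nat.descFactorial_le_pow n t
  rw [le_div_iff₀ hdesc_pos]
  calc (1/4) * A^i * B^k * (n.descFactorial t : ℝ)
      ≤ (1/4) * A^i * B^k * (n:ℝ)^t :=
        mul_le_mul_of_nonneg_left hdesc_le (by positivity)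
    _ ≤ _ := hfinal
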